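/- Let G = (V,E) be a connected graph and let S ⊆ V be a nonempty set of terminal vertices. Then the number of distinct minimal S-Steiner trees in G is at most τ(G), the number of spanning trees of G. -/

import Mathlib

open SimpleGraph

/-- A subgraph is a spanning tree if it is a tree containing all vertices. -/
def IsSpanningTree {V : Type*} {G : SimpleGraph V} (T : G.Subgraph) : Prop :=
  T.coe.IsTree ∧ T.IsSpanning

/-- A subgraph is a minimal `S`-Steiner tree if it is a tree containing all of `S`
whose leaves (vertices of degree 1) all belong to `S`. -/
def IsMinimalSteinerTree {V : Type*} {G : SimpleGraph V} (S : Set V) (T : G.Subgraph) : Prop :=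
  T.coe.IsTree ∧ S ⊆ T.verts ∧ ∀ v ∈ T.verts, (T.neighborSet v).ncard = 1 → v ∈ S

section TreeLemmas
variable {W : Type*} {H : SimpleGraph W}

/-- In an acyclic graph, a neighbor of the start of a path that lies on the path
must be the second vertex. -/
lemma aux_adj_mem_support_eq_getVert_one (hac : H.IsAcyclic) {u r z : W} (p : H.Walk u r)
    (hp : p.IsPath) (hadj : H.Adj u z) (hz : z ∈ p.support) : z = p.getVert 1 := by
  classical
  cases p with
  | nil =>
    rw [Walk.mem_support_nil_iff] at hz
    subst hz
    exact absurd hadj (H.loopless.irrefl _)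
  | @cons _ x _ h t =>
    rw [Walk.support_cons, List.mem_cons] at hz
    rcases hz with rfl | hz
    · exact absurd hadj (H.loopless.irrefl _)
    · simp only [Walk.getVert_cons_succ, Walk.getVert_zero]
      rw [Walk.cons_isPath_iff] at hp
      by_contra hne
      have ht' : (t.takeUntil z hz).IsPath := hp.1.takeUntil hz
      have hinner : (Walk.cons h (t.takeUntil z hz)).IsPath := by
        rw [Walk.cons_isPath_iff]
        exact ⟨ht', fun hu => hp.2 (Walk.support_takeUntil_subset _ hz hu)⟩
      have hno : s(z, u) ∉ (Walk.cons h (t.takeUntil z hz)).edges := by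
        rw [Walk.edges_cons, List.mem_cons]
        rintro (he | he)
        · rw [Sym2.eq, Sym2.rel_iff'] at he
          rcases he with ⟨rfl, rfl⟩ | ⟨h1, h2⟩
          · exact hadj.ne rfl
          · exact hne (by simp_all)
        · exact hp.2 (Walk.support_takeUntil_subset _ hz
            ((t.takeUntil z hz).snd_mem_support_of_mem_edges he))
      have hcyc : (Walk.cons hadj.symm (Walk.cons h (t.takeUntil z hz))).IsCycle :=
        (Walk.cons_isCycle_iff _ _).mpr ⟨hinner, hno⟩
      exact hac _ hcyc

/-- In a finite acyclic graph, any vertex reachable from `r ∈ A` lies on some path from `r`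
to a vertex of `A`, provided `A` contains all vertices of degree one. -/
lemma aux_exists_path_through [Finite W] (hac : H.IsAcyclic) {A : Set W}
    (hdeg : ∀ u, (H.neighborSet u).ncard = 1 → u ∈ A) {r v : W} (hr : r ∈ A)
    (hreach : H.Reachable r v) :
    ∃ a ∈ A, ∃ p : H.Walk r a, p.IsPath ∧ v ∈ p.support := by
  classical
  haveI : Fintype W := Fintype.ofFinite W
  set L : Set ℕ := {n | ∃ (a : W) (p : H.Walk r a), p.IsPath ∧ v ∈ p.support ∧ p.length = n}
    with hLdef
  have hne : L.Nonempty := by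
    obtain ⟨w⟩ := hreach
    exact ⟨(w.toPath : H.Walk r v).length, v, (w.toPath : H.Walk r v), w.toPath.2,
      Walk.end_mem_support _, rfl⟩
  have hbdd : BddAbove L := by
    refine ⟨Fintype.card W, fun n hn => ?_⟩
    obtain ⟨a, p, hp, _, hl⟩ := hn
    exact hl ▸ hp.length_lt.le
  obtain ⟨a, p, hp, hv, hlen⟩ : sSup L ∈ L := Nat.sSup_mem hne hbdd
  have hmax : ∀ m ∈ L, m ≤ p.length := fun m hm => hlen ▸ le_csSup hbdd hm
  have hnbr : ∀ z, H.Adj a z → z ∈ p.support := by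
    intro z hz
    by_contra hzs
    have hqrev : (p.concat hz).reverse.IsPath := by
      rw [Walk.reverse_concat, Walk.cons_isPath_iff]
      exact ⟨hp.reverse, by simpa [Walk.support_reverse] using hzs⟩
    have hq : (p.concat hz).IsPath := by rwa [Walk.isPath_reverse_iff] at hqrev
    have : p.length + 1 ∈ L := by
      refine ⟨z, p.concat hz, hq, ?_, by rw [Walk.length_concat]⟩
      rw [Walk.support_concat]
      simp [List.concat_eq_append, hv]
    exact absurd (hmax _ this) (by omega)
  by_cases hn : p.Nil
  · have hsup := Walk.nil_iff_support_eq.mp hn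
    have har : a = r := by
      have := Walk.end_mem_support p
      rw [hsup] at this; simpa using this
    exact ⟨a, har ▸ hr, p, hp, hv⟩
  · have hnr : ¬ p.reverse.Nil := by
      rw [Walk.nil_iff_length_eq, Walk.length_reverse]
      rwa [Walk.nil_iff_length_eq] at hn
    have hadj1 : H.Adj a (p.reverse.getVert 1) := Walk.adj_snd (p := p.reverse) hnr
    have hset : H.neighborSet a = {p.reverse.getVert 1} := by
      apply Set.eq_singleton_iff_unique_mem.mpr
      refine ⟨hadj1, fun z hz => ?_⟩
      exact aux_adj_mem_support_eq_getVert_one hac p.reverse hp.reverse hz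
        (by rw [Walk.support_reverse, List.mem_reverse]; exact hnbr z hz)
    refine ⟨a, hdeg a (by rw [hset]; exact Set.ncard_singleton _), p, hp, hv⟩

/-- A walk of length one witnesses adjacency of its endpoints. -/
lemma aux_adj_of_length_one {a b : W} (p : H.Walk a b) (h : p.length = 1) : H.Adj a b := by
  cases p with
  | nil => simp at h
  | cons hadj t =>
    have ht : t.length = 0 := by simpa using h
    have := (Walk.nil_iff_length_eq.mpr ht).eq
    exact this ▸ hadj

end TreeLemmas

section SubgraphPlumbing
variable {V : Type*} {G : SimpleGraph V}

/-- The inclusion homomorphism from `H.coe` to `H.spanningCoe`. -/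
def subgraphHomCoe (H : G.Subgraph) : H.coe →g H.spanningCoe where
  toFun := Subtype.val
  map_rel' := fun h => h

lemma subgraphHomCoeInjective (H : G.Subgraph) : Function.Injective (subgraphHomCoe H) :=
  Subtype.val_injective

/-- Lift a walk in `H.spanningCoe` with endpoints in `H.verts` to a walk in `H.coe`. -/
def subgraphLiftWalk {H : G.Subgraph} :
    ∀ {a b : V} (_ : H.spanningCoe.Walk a b) (ha : a ∈ H.verts) (hb : b ∈ H.verts),
      H.coe.Walk ⟨a, ha⟩ ⟨b, hb⟩
  | _, _, Walk.nil, _, _ => Walk.nil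
  | _, _, Walk.cons h t, ha, hb =>
      Walk.cons (by exact h) (subgraphLiftWalk t (H.edge_vert (H.symm.symm _ _ h)) hb)

lemma subgraphLiftWalkMap {H : G.Subgraph} :
    ∀ {a b : V} (c : H.spanningCoe.Walk a b) (ha : a ∈ H.verts) (hb : b ∈ H.verts),
      (subgraphLiftWalk c ha hb).map (subgraphHomCoe H) = c
  | _, _, Walk.nil, _, _ => rfl
  | _, _, Walk.cons h t, ha, hb => by
      simp only [subgraphLiftWalk, Walk.map_cons, subgraphLiftWalkMap t]
      exact congrArg (Walk.cons h) (subgraphLiftWalkMap t _ hb)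

lemma subgraph_spanningCoe_isAcyclic {H : G.Subgraph} (h : H.coe.IsAcyclic) :
    H.spanningCoe.IsAcyclic := by
  intro v c hc
  have hv : v ∈ H.verts := by
    obtain ⟨u, hadj, q, rfl⟩ := Walk.not_nil_iff.mp hc.not_nil
    exact H.edge_vert hadj
  refine h (subgraphLiftWalk c hv hv) ?_
  rw [← Walk.map_isCycle_iff_of_injective (subgraphHomCoeInjective H)]
  rwa [subgraphLiftWalkMap]

lemma subgraph_coe_isAcyclic_of_spanningCoe {H : G.Subgraph} (h : H.spanningCoe.IsAcyclic) :
    H.coe.IsAcyclic := fun _ c hc => h _ (hc.map (subgraphHomCoeInjective H))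

end SubgraphPlumbing

section Pendant
variable {V : Type*} {G : SimpleGraph V} {H : G.Subgraph} {x y : V}

lemma pendant_adj (hxy : G.Adj x y) (hy : y ∉ H.verts) {z : V}
    (h : (H ⊔ G.subgraphOfAdj hxy).Adj y z) : z = x := by
  rw [Subgraph.sup_adj, subgraphOfAdj_adj] at h
  rcases h with h | h
  · exact absurd (H.edge_vert h) hy
  · rcases Sym2.eq_iff.mp h with ⟨h1, h2⟩ | ⟨h1, h2⟩
    · exact absurd h1 hxy.ne
    · exact h1.symm

lemma pendant_spanningCoe_isAcyclic (hxy : G.Adj x y) (hy : y ∉ H.verts)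
    (hH : H.coe.IsAcyclic) : (H ⊔ G.subgraphOfAdj hxy).spanningCoe.IsAcyclic := by
  classical
  set H' := H ⊔ G.subgraphOfAdj hxy with hH'
  intro v c hc
  by_cases hyv : y ∈ c.support
  · have hc' : (c.rotate y hyv).IsCycle := hc.rotate hyv
    set c' := c.rotate y hyv with hc'def
    obtain ⟨w, hadj, t, hct⟩ := Walk.not_nil_iff.mp hc'.not_nil
    have hw : w = x := pendant_adj hxy hy hadj
    subst hw
    rw [hct] at hc'
    rw [Walk.cons_isCycle_iff] at hc'
    obtain ⟨htp, hne⟩ := hc'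
    have htnil : ¬ t.Nil := Walk.not_nil_of_ne hxy.ne
    have htrnil : ¬ t.reverse.Nil := by
      rw [Walk.nil_iff_length_eq, Walk.length_reverse]
      rwa [Walk.nil_iff_length_eq] at htnil
    obtain ⟨z, hadj2, t2, hrt⟩ := Walk.not_nil_iff.mp htrnil
    have hz := pendant_adj hxy hy hadj2
    subst hz
    have ht2 : t2 = Walk.nil := by
      have : t.reverse.IsPath := htp.reverse
      rw [hrt, Walk.cons_isPath_iff] at this
      exact Walk.isPath_iff_eq_nil.mp this.1
    apply hne
    rw [← List.mem_reverse, ← Walk.edges_reverse, hrt, ht2]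
    simp
  · have hyd : ∀ z ∈ c.support, z ≠ y := fun z hz h => hyv (h ▸ hz)
    have hedges : ∀ e ∈ c.edges, e ∈ H.spanningCoe.edgeSet := by
      intro e he
      induction e using Sym2.ind with
      | _ a b =>
        have hmem := c.edges_subset_edgeSet he
        rw [mem_edgeSet] at hmem ⊢
        change H'.Adj a b at hmem
        rw [hH', Subgraph.sup_adj, subgraphOfAdj_adj] at hmem
        rcases hmem with h | h
        · exact h
        · exfalso
          rcases Sym2.eq_iff.mp h with ⟨h1, h2⟩ | ⟨h1, h2⟩
          · exact hyd b (c.snd_mem_support_of_mem_edges he) h2.symm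
          · exact hyd a (c.fst_mem_support_of_mem_edges he) h2.symm
    exact subgraph_spanningCoe_isAcyclic hH _ (hc.transfer hedges)

lemma pendant_coe_isTree (hxy : G.Adj x y) (hx : x ∈ H.verts) (hy : y ∉ H.verts)
    (hH : H.coe.IsTree) : (H ⊔ G.subgraphOfAdj hxy).coe.IsTree := by
  set H' := H ⊔ G.subgraphOfAdj hxy with hH'
  have hxv : x ∈ H'.verts := Or.inl hx
  have hyv : y ∈ H'.verts := Or.inr (Or.inr rfl)
  have hadjxy : H'.coe.Adj ⟨x, hxv⟩ ⟨y, hyv⟩ := by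
    change H'.Adj x y
    exact Or.inr (by simp)
  constructor
  · have hreach : ∀ v : H'.verts, H'.coe.Reachable v ⟨x, hxv⟩ := by
      rintro ⟨v, hv | hv⟩
      · have : H.coe.Reachable ⟨v, hv⟩ ⟨x, hx⟩ := hH.isConnected ⟨v, hv⟩ ⟨x, hx⟩
        exact this.map (Subgraph.inclusion le_sup_left)
      · simp only [subgraphOfAdj_verts, Set.mem_insert_iff, Set.mem_singleton_iff] at hv
        rcases hv with rfl | rfl
        · rfl
        · exact hadjxy.symm.reachable
    refine { preconnected := fun u v => (hreach u).trans (hreach v).symm,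
             nonempty := ⟨⟨x, hxv⟩⟩ }
  · exact subgraph_coe_isAcyclic_of_spanningCoe
      (pendant_spanningCoe_isAcyclic hxy hy hH.IsAcyclic)

end Pendant

section Extension
variable {V : Type*} {G : SimpleGraph V}

lemma exists_spanning_tree_ge [Fintype V] (hG : G.Connected) :
    ∀ (n : ℕ) (H : G.Subgraph), H.coe.IsTree → (H.vertsᶜ).ncard ≤ n →
      ∃ T, H ≤ T ∧ IsSpanningTree T := by
  intro n
  induction n with
  | zero =>
    intro H hH hcard
    have hempty : H.vertsᶜ = ∅ := (Set.ncard_eq_zero (Set.toFinite _)).mp (Nat.le_zero.mp hcard)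
    refine ⟨H, le_rfl, hH, fun v => ?_⟩
    by_contra hv
    exact absurd (Set.mem_compl hv) (hempty ▸ Set.notMem_empty v)
  | succ n ih =>
    intro H hH hcard
    by_cases hsp : H.IsSpanning
    · exact ⟨H, le_rfl, hH, hsp⟩
    · obtain ⟨w, hw⟩ : ∃ w, w ∉ H.verts := by
        by_contra h
        push_neg at h
        exact hsp h
      obtain ⟨u₀, hu₀⟩ : Nonempty H.verts := hH.isConnected.nonempty
      obtain ⟨p⟩ := hG.preconnected u₀ w
      obtain ⟨d, _, hdf, hds⟩ := p.exists_boundary_dart H.verts hu₀ hw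
      have hxy : G.Adj d.fst d.snd := d.adj
      set H' := H ⊔ G.subgraphOfAdj hxy with hH'
      have htree' : H'.coe.IsTree := pendant_coe_isTree hxy hdf hds hH
      have hsub : H'.vertsᶜ ⊂ H.vertsᶜ := by
        constructor
        · intro v hv
          rw [Set.mem_compl_iff] at hv ⊢
          exact fun h => hv (Or.inl h)
        · intro hsub2
          have hmem : d.snd ∈ H'.verts := Or.inr (Or.inr rfl)
          exact (hsub2 (Set.mem_compl hds)) hmem
      have hcard' : (H'.vertsᶜ).ncard ≤ n := by
        have := Set.ncard_lt_ncard hsub (Set.toFinite _)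
        omega
      obtain ⟨T, hle, hT⟩ := ih H' htree' hcard'
      exact ⟨T, le_trans le_sup_left hle, hT⟩

end Extension

section Uniqueness
variable {V : Type*} [Fintype V] {G : SimpleGraph V}

lemma steiner_le {S : Set V} (hS : S.Nonempty) {T' T₁ T₂ : G.Subgraph}
    (hT' : T'.coe.IsAcyclic) (h1 : IsMinimalSteinerTree S T₁)
    (h2tree : T₂.coe.IsTree) (h2S : S ⊆ T₂.verts)
    (hle1 : T₁ ≤ T') (hle2 : T₂ ≤ T') : T₁ ≤ T₂ := by
  classical
  obtain ⟨r, hr⟩ := hS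
  have hr1 : r ∈ T₁.verts := h1.2.1 hr
  have hr2 : r ∈ T₂.verts := h2S hr
  have hverts : ∀ v ∈ T₁.verts, v ∈ T₂.verts := by
    intro v hv
    have hdeg : ∀ u : T₁.verts, (T₁.coe.neighborSet u).ncard = 1 →
        u ∈ (Subtype.val ⁻¹' S : Set T₁.verts) := by
      intro u hu
      refine h1.2.2 u.val u.2 ?_
      rw [← Nat.card_coe_set_eq, ← Nat.card_congr (Subgraph.coeNeighborSetEquiv u),
        Nat.card_coe_set_eq]
      exact hu
    obtain ⟨a, ha, p, hp, hvp⟩ := aux_exists_path_through h1.1.IsAcyclic hdeg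
      (r := ⟨r, hr1⟩) (v := ⟨v, hv⟩) hr
      (h1.1.isConnected.preconnected ⟨r, hr1⟩ ⟨v, hv⟩)
    have haS : a.val ∈ S := ha
    have hrT' : r ∈ T'.verts := hle1.1 hr1
    have haT' : a.val ∈ T'.verts := hle1.1 a.2
    have ha2 : a.val ∈ T₂.verts := h2S haS
    have hp' : (p.map (Subgraph.inclusion hle1)).IsPath :=
      Walk.map_isPath_of_injective (Subgraph.inclusion.injective hle1) hp
    obtain ⟨q0⟩ := h2tree.isConnected.preconnected ⟨r, hr2⟩ ⟨a.val, ha2⟩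
    have hq : (q0.toPath : T₂.coe.Walk ⟨r, hr2⟩ ⟨a.val, ha2⟩).IsPath := q0.toPath.2
    have hq' : ((q0.toPath : T₂.coe.Walk ⟨r, hr2⟩ ⟨a.val, ha2⟩).map
        (Subgraph.inclusion hle2)).IsPath :=
      Walk.map_isPath_of_injective (Subgraph.inclusion.injective hle2) hq
    have hkey : (⟨p.map (Subgraph.inclusion hle1), hp'⟩ :
          T'.coe.Path ⟨r, hrT'⟩ ⟨a.val, haT'⟩) =
        ⟨(q0.toPath : T₂.coe.Walk ⟨r, hr2⟩ ⟨a.val, ha2⟩).map (Subgraph.inclusion hle2), hq'⟩ :=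
      hT'.path_unique _ _
    have hsupp : (p.map (Subgraph.inclusion hle1)).support =
        ((q0.toPath : T₂.coe.Walk ⟨r, hr2⟩ ⟨a.val, ha2⟩).map (Subgraph.inclusion hle2)).support :=
      congrArg (fun P : T'.coe.Path ⟨r, hrT'⟩ ⟨a.val, haT'⟩ =>
        (P : T'.coe.Walk ⟨r, hrT'⟩ ⟨a.val, haT'⟩).support) hkey
    have hv1 : (⟨v, hle1.1 hv⟩ : T'.verts) ∈ (p.map (Subgraph.inclusion hle1)).support := by
      rw [Walk.support_map]
      exact List.mem_map_of_mem hvp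
    rw [hsupp, Walk.support_map] at hv1
    obtain ⟨z, hz, hzv⟩ := List.mem_map.mp hv1
    have : z.val = v := congrArg Subtype.val hzv
    exact this ▸ z.2
  refine ⟨hverts, ?_⟩
  intro aa bb hab
  have ha1 : aa ∈ T₁.verts := T₁.edge_vert hab
  have hb1 : bb ∈ T₁.verts := T₁.edge_vert hab.symm
  have ha2 : aa ∈ T₂.verts := hverts _ ha1
  have hb2 : bb ∈ T₂.verts := hverts _ hb1
  have hne : aa ≠ bb := G.ne_of_adj (T₁.adj_sub hab)
  have hadjcoe : T'.coe.Adj ⟨aa, hle1.1 ha1⟩ ⟨bb, hle1.1 hb1⟩ := hle1.2 hab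
  have he : (Walk.cons hadjcoe Walk.nil).IsPath := by
    rw [Walk.cons_isPath_iff]
    refine ⟨Walk.IsPath.nil, ?_⟩
    simp only [Walk.support_nil, List.mem_singleton, Subtype.mk.injEq]
    exact hne
  obtain ⟨q0⟩ := h2tree.isConnected.preconnected ⟨aa, ha2⟩ ⟨bb, hb2⟩
  have hq : (q0.toPath : T₂.coe.Walk ⟨aa, ha2⟩ ⟨bb, hb2⟩).IsPath := q0.toPath.2
  have hq' : ((q0.toPath : T₂.coe.Walk ⟨aa, ha2⟩ ⟨bb, hb2⟩).map
      (Subgraph.inclusion hle2)).IsPath :=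
    Walk.map_isPath_of_injective (Subgraph.inclusion.injective hle2) hq
  have hkey : (⟨Walk.cons hadjcoe Walk.nil, he⟩ :
        T'.coe.Path ⟨aa, hle1.1 ha1⟩ ⟨bb, hle1.1 hb1⟩) =
      ⟨(q0.toPath : T₂.coe.Walk ⟨aa, ha2⟩ ⟨bb, hb2⟩).map (Subgraph.inclusion hle2), hq'⟩ :=
    hT'.path_unique _ _
  have hlen : ((q0.toPath : T₂.coe.Walk ⟨aa, ha2⟩ ⟨bb, hb2⟩).map
      (Subgraph.inclusion hle2)).length = 1 := by
    have hwalks : Walk.cons hadjcoe Walk.nil =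
        Walk.map (Subgraph.inclusion hle2) (q0.toPath : T₂.coe.Walk ⟨aa, ha2⟩ ⟨bb, hb2⟩) :=
      congrArg Subtype.val hkey
    rw [← hwalks]
    rfl
  rw [Walk.length_map] at hlen
  exact aux_adj_of_length_one _ hlen

lemma steiner_unique {S : Set V} (hS : S.Nonempty) {T' T₁ T₂ : G.Subgraph}
    (hT' : T'.coe.IsAcyclic) (h1 : IsMinimalSteinerTree S T₁) (h2 : IsMinimalSteinerTree S T₂)
    (hle1 : T₁ ≤ T') (hle2 : T₂ ≤ T') : T₁ = T₂ :=
  le_antisymm (steiner_le hS hT' h1 h2.1 h2.2.1 hle1 hle2)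
    (steiner_le hS hT' h2 h1.1 h1.2.1 hle2 hle1)

end Uniqueness

/-- The number of distinct minimal `S`-Steiner trees in `G` is at most `τ(G)`,
the number of spanning trees of `G`. -/
theorem stmt2 {V : Type*} [Fintype V] (G : SimpleGraph V) (hG : G.Connected)
    (S : Set V) (hS : S.Nonempty) :
    {T : G.Subgraph | IsMinimalSteinerTree S T}.ncard
      ≤ {T : G.Subgraph | IsSpanningTree T}.ncard := by
  classical
  haveI : Finite G.Subgraph :=
    Finite.of_injective (fun T : G.Subgraph => (T.verts, T.Adj))
      (fun A B h => Subgraph.ext (congrArg Prod.fst h) (congrArg Prod.snd h))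
  set f : G.Subgraph → G.Subgraph := fun T =>
    if h : ∃ T', T ≤ T' ∧ IsSpanningTree T' then h.choose else ⊥ with hf
  have hmem : ∀ T ∈ {T : G.Subgraph | IsMinimalSteinerTree S T},
      T ≤ f T ∧ IsSpanningTree (f T) := by
    intro T hT
    have hex : ∃ T', T ≤ T' ∧ IsSpanningTree T' :=
      exists_spanning_tree_ge hG (T.vertsᶜ).ncard T hT.1 le_rfl
    rw [hf]
    simp only [dif_pos hex]
    exact hex.choose_spec
  have hinj : Set.InjOn f {T : G.Subgraph | IsMinimalSteinerTree S T} := by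
    intro T₁ h1 T₂ h2 heq
    obtain ⟨hle1, hsp1⟩ := hmem T₁ h1
    obtain ⟨hle2, hsp2⟩ := hmem T₂ h2
    rw [heq] at hle1
    exact steiner_unique hS hsp2.1.IsAcyclic h1 h2 hle1 hle2
  calc {T : G.Subgraph | IsMinimalSteinerTree S T}.ncard
      = (f '' {T : G.Subgraph | IsMinimalSteinerTree S T}).ncard :=
        (Set.ncard_image_of_injOn hinj).symm
    _ ≤ {T : G.Subgraph | IsSpanningTree T}.ncard := by
        refine Set.ncard_le_ncard ?_ (Set.toFinite _)
        rintro _ ⟨T, hT, rfl⟩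
        exact (hmem T hT).2
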